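/- Let A and B be nonempty subsets of a finite abelian group G with |A| ≥ |B|, |A+B| < (3/2)|A|, and |B| > (3/4)|A|. Then there is a subgroup H of G with |H| < (3/2)|A| such that A+B lies in a single coset of H. -/

import Mathlib

open Pointwise Finset

section Helpers

variable {G : Type*} [AddCommGroup G] [DecidableEq G]

private theorem keyNum (a b m x : ℤ) (hb : b ≤ a) (h2 : 3*a < 4*b) (h3 : 2*m < 3*a)
    (h4 : a ≤ m) (h6 : a + b ≤ x)
    (C1 : x*(2*a) ≤ a*a + x*m)
    (C2 : (x-m)*(2*a+b) + m*(2*a) ≤ a*a + (x-m)*x + m*m) : False := by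
  set d := m - a with hdd
  set w := x - m with hww
  have hd : 0 ≤ d := by omega
  have hda : 2*d + 1 ≤ a := by omega
  have hw1 : b - d ≤ w := by omega
  have hwpos : 1 ≤ w := by omega
  have C1' : w*(a-d) ≤ d*d := by nlinarith [C1]
  have C2' : w*(a+b-d-w) ≤ d*d := by nlinarith [C2]
  have E1 : d*d + 1 ≤ a*(b-d) := by nlinarith
  have E2 : d*d + 1 ≤ b*(a-d) := by nlinarith
  rcases le_or_gt (a - d) w with hc | hc
  · nlinarith [mul_nonneg (sub_nonneg.2 hc) (sub_nonneg.2 C1'),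
               mul_pos (by linarith : (0:ℤ) < w) (by linarith : (0:ℤ) < b*(a-d) - d*d)]
  · have h2' : 0 ≤ w - b + d := by omega
    have h3' : 0 ≤ a - b := by omega
    nlinarith [mul_nonneg (by linarith : (0:ℤ) ≤ a-d-w) (by linarith : (0:ℤ) ≤ a*(b-d) - d*d),
               mul_nonneg h2' (by linarith : (0:ℤ) ≤ b*(a-d) - d*d),
               mul_nonneg (mul_nonneg h3' h2') (by linarith : (0:ℤ) ≤ a-d-w),
               mul_pos (by linarith : (0:ℤ) < a-d-w) (by linarith : (0:ℤ) < a*(b-d) - d*d)]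

private theorem transInter (S : Finset G) (u v : G) :
    ((u +ᵥ S) ∩ (v +ᵥ S)).card = (S ∩ ((u - v) +ᵥ S)).card := by
  have h : (u +ᵥ S) ∩ (v +ᵥ S) = v +ᵥ (((u - v) +ᵥ S) ∩ S) := by
    rw [vadd_finset_inter, vadd_vadd, add_sub_cancel]
  rw [h, card_vadd_finset, inter_comm]

private theorem overlap (S T : Finset G) (u v : G) (hu : u ∈ T) (hv : v ∈ T) :
    2 * S.card ≤ (S + T).card + (S ∩ ((u - v) +ᵥ S)).card := by
  have hsub : (u +ᵥ S) ∪ (v +ᵥ S) ⊆ S + T := by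
    intro z hz
    rcases mem_union.1 hz with h | h
    · obtain ⟨y, hy, rfl⟩ := mem_vadd_finset.1 h
      have : y + u ∈ S + T := add_mem_add hy hu
      simpa [vadd_eq_add, add_comm] using this
    · obtain ⟨y, hy, rfl⟩ := mem_vadd_finset.1 h
      have : y + v ∈ S + T := add_mem_add hy hv
      simpa [vadd_eq_add, add_comm] using this
  have h2 := card_inter_add_card_union (u +ᵥ S) (v +ᵥ S)
  have h3 := transInter S u v
  have h4 := card_le_card hsub
  rw [card_vadd_finset, card_vadd_finset] at h2
  omega

private theorem vaddNeg (S : Finset G) (g : G) : g +ᵥ (-S) = -((-g) +ᵥ S) := by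
  ext y
  simp only [mem_neg, mem_vadd_finset, vadd_eq_add]
  constructor
  · rintro ⟨p, ⟨q, hq, rfl⟩, rfl⟩
    exact ⟨-g + q, ⟨q, hq, rfl⟩, by abel⟩
  · rintro ⟨p, ⟨q, hq, rfl⟩, rfl⟩
    exact ⟨-q, ⟨q, hq, rfl⟩, by abel⟩

private theorem negInter (S : Finset G) (g : G) :
    ((-S) ∩ (g +ᵥ (-S))).card = (S ∩ ((-g) +ᵥ S)).card := by
  rw [vaddNeg, ← Finset.neg_inter, card_neg]

end Helpers

theorem sumset_in_coset_large_sets {G : Type*} [AddCommGroup G] [Fintype G] [DecidableEq G]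
    (A B : Finset G) (hA : A.Nonempty) (hB : B.Nonempty)
    (hAB : B.card ≤ A.card)
    (h1 : 2 * (A + B).card < 3 * A.card)
    (h2 : 3 * A.card < 4 * B.card) :
    ∃ (H : AddSubgroup G) (x : G), 2 * Nat.card H < 3 * A.card ∧
      ∀ z ∈ A + B, z - x ∈ H := by
  classical
  obtain ⟨a0, ha0⟩ := hA
  obtain ⟨b0, hb0⟩ := hB
  have hBne : B.Nonempty := ⟨b0, hb0⟩
  have hAne : A.Nonempty := ⟨a0, ha0⟩
  -- overlap bounds
  have ov1 : ∀ g ∈ B - B, 2 * A.card ≤ (A + B).card + (A ∩ (g +ᵥ A)).card := by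
    intro g hg
    obtain ⟨u, hu, v, hv, rfl⟩ := mem_sub.1 hg
    exact overlap A B u v hu hv
  have ov2 : ∀ g ∈ A - A, 2 * B.card ≤ (A + B).card + (B ∩ (g +ᵥ B)).card := by
    intro g hg
    obtain ⟨u, hu, v, hv, rfl⟩ := mem_sub.1 hg
    have := overlap B A u v hu hv
    rwa [add_comm B A] at this
  -- A - A = B - B
  have hsetEq : A - A = B - B := by
    ext g
    constructor
    · intro hg
      have h := ov2 g hg
      have hne : (B ∩ (g +ᵥ B)).Nonempty := card_pos.1 (by omega)
      obtain ⟨p, hp⟩ := hne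
      obtain ⟨hpB, hpv⟩ := mem_inter.1 hp
      obtain ⟨q, hq, hgq⟩ := mem_vadd_finset.1 hpv
      rw [vadd_eq_add] at hgq
      rw [eq_sub_of_add_eq hgq]
      exact sub_mem_sub hpB hq
    · intro hg
      have h := ov1 g hg
      have hne : (A ∩ (g +ᵥ A)).Nonempty := card_pos.1 (by omega)
      obtain ⟨p, hp⟩ := hne
      obtain ⟨hpA, hpv⟩ := mem_inter.1 hp
      obtain ⟨q, hq, hgq⟩ := mem_vadd_finset.1 hpv
      rw [vadd_eq_add] at hgq
      rw [eq_sub_of_add_eq hgq]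
      exact sub_mem_sub hpA hq
  -- closure under subtraction
  have hsubC : ∀ g1 ∈ B - B, ∀ g2 ∈ B - B, g1 - g2 ∈ B - B := by
    intro g1 hg1 g2 hg2
    have c1 := ov1 g1 hg1
    have c2 := ov1 g2 hg2
    have hun : ((A ∩ (g1 +ᵥ A)) ∪ (A ∩ (g2 +ᵥ A))).card ≤ A.card :=
      card_le_card (union_subset inter_subset_left inter_subset_left)
    have hiu := card_inter_add_card_union (A ∩ (g1 +ᵥ A)) (A ∩ (g2 +ᵥ A))
    have hne : ((A ∩ (g1 +ᵥ A)) ∩ (A ∩ (g2 +ᵥ A))).Nonempty := card_pos.1 (by omega)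
    obtain ⟨p, hp⟩ := hne
    obtain ⟨hp1, hp2⟩ := mem_inter.1 hp
    obtain ⟨q1, hq1, hgq1⟩ := mem_vadd_finset.1 (mem_inter.1 hp1).2
    obtain ⟨q2, hq2, hgq2⟩ := mem_vadd_finset.1 (mem_inter.1 hp2).2
    rw [vadd_eq_add] at hgq1 hgq2
    have he : g1 - g2 = q2 - q1 := by
      rw [eq_sub_of_add_eq hgq1, eq_sub_of_add_eq hgq2]; abel
    rw [he, ← hsetEq]
    exact sub_mem_sub hq2 hq1
  have h0mem : (0 : G) ∈ B - B := by
    rw [← sub_self b0]; exact sub_mem_sub hb0 hb0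
  have hnegC : ∀ g ∈ B - B, -g ∈ B - B := by
    intro g hg
    have := hsubC 0 h0mem g hg
    rwa [zero_sub] at this
  have haddC : ∀ g1 ∈ B - B, ∀ g2 ∈ B - B, g1 + g2 ∈ B - B := by
    intro g1 hg1 g2 hg2
    have := hsubC g1 hg1 (-g2) (hnegC g2 hg2)
    rwa [sub_neg_eq_add] at this
  -- the subgroup
  set H : AddSubgroup G :=
    { carrier := (↑(B - B) : Set G)
      zero_mem' := by exact_mod_cast h0mem
      add_mem' := by
        intro p q hp hq
        simp only [Finset.mem_coe] at *
        exact haddC p hp q hq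
      neg_mem' := by
        intro p hp
        simp only [Finset.mem_coe] at *
        exact hnegC p hp } with hHdef
  have hHcard : Nat.card H = (B - B).card := by
    have : Nat.card H = Nat.card ((↑(B - B) : Set G)) := rfl
    rw [this, Nat.card_coe_set_eq, Set.ncard_coe_finset]
  have hmemH : ∀ g : G, g ∈ H ↔ g ∈ B - B := fun g => Finset.mem_coe
  refine ⟨H, a0 + b0, ?_, ?_⟩
  · rw [hHcard]
    by_contra hcon
    push_neg at hcon
    -- A + B sits in the coset (a0+b0) +ᵥ (B−B)
    have hcosetMem : ∀ z ∈ A + B, z - (a0 + b0) ∈ B - B := by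
      intro z hz
      obtain ⟨p, hp, q, hq, rfl⟩ := mem_add.1 hz
      have e : p + q - (a0 + b0) = (p - a0) + (q - b0) := by abel
      rw [e]
      refine haddC _ ?_ _ (sub_mem_sub hq hb0)
      rw [← hsetEq]; exact sub_mem_sub hp ha0
    have hABsub : A + B ⊆ (a0 + b0) +ᵥ (B - B) := by
      intro z hz
      exact mem_vadd_finset.2 ⟨z - (a0 + b0), hcosetMem z hz, by rw [vadd_eq_add]; abel⟩
    rcases lt_or_ge ((B - B).card) (A.card + B.card) with hxab | hxab
    · -- pigeonhole: A+B is the full coset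
      have hsup : ((a0 + b0) +ᵥ (B - B)) ⊆ A + B := by
        intro z hz
        obtain ⟨h, hh, hzeq⟩ := mem_vadd_finset.1 hz
        rw [vadd_eq_add] at hzeq
        have hAcoset : A ⊆ a0 +ᵥ (B - B) := by
          intro p hp
          refine mem_vadd_finset.2 ⟨p - a0, ?_, by rw [vadd_eq_add]; abel⟩
          rw [← hsetEq]; exact sub_mem_sub hp ha0
        have hzB : z +ᵥ (-B) ⊆ a0 +ᵥ (B - B) := by
          intro y hy
          obtain ⟨r, hr, rfl⟩ := mem_vadd_finset.1 hy
          obtain ⟨q, hq, rfl⟩ := mem_neg.1 hr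
          refine mem_vadd_finset.2 ⟨(b0 - q) + h, haddC _ (sub_mem_sub hb0 hq) _ hh, ?_⟩
          rw [vadd_eq_add, vadd_eq_add, ← hzeq]; abel
        have hiu := card_inter_add_card_union A (z +ᵥ (-B))
        have hus := card_le_card (union_subset hAcoset hzB)
        rw [card_vadd_finset] at hus
        rw [card_vadd_finset, card_neg] at hiu
        have hne : (A ∩ (z +ᵥ (-B))).Nonempty := card_pos.1 (by omega)
        obtain ⟨p, hp⟩ := hne
        obtain ⟨hpA, hpv⟩ := mem_inter.1 hp
        obtain ⟨r, hr, hpr⟩ := mem_vadd_finset.1 hpv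
        obtain ⟨q, hq, rfl⟩ := mem_neg.1 hr
        rw [vadd_eq_add] at hpr
        have : z = p + q := by rw [← hpr]; abel
        rw [this]
        exact add_mem_add hpA hq
      have hmx : (A + B).card = (B - B).card := by
        rw [Subset.antisymm hABsub hsup, card_vadd_finset]
      omega
    · -- the hard case: x ≥ a + b leads to a numeric contradiction
      exfalso
      set T := ((a0 + b0) +ᵥ (B - B)) \ (A + B) with hTdef
      have hTcard : T.card + (A + B).card = (B - B).card := by
        rw [hTdef, card_sdiff_add_card_eq_card hABsub, card_vadd_finset]
      have hTne : T.Nonempty := card_pos.1 (by omega)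
      obtain ⟨s, hs⟩ := hTne
      have hsmem := (mem_sdiff.1 hs)
      obtain ⟨hs1, hs2⟩ := hsmem
      obtain ⟨hs0, hhs0, hseq⟩ := mem_vadd_finset.1 hs1
      rw [vadd_eq_add] at hseq
      set Q := (-s) +ᵥ T with hQdef
      have hQcard : Q.card = T.card := card_vadd_finset _ _
      have hQsub : Q ⊆ B - B := by
        intro g hg
        obtain ⟨t, ht, rfl⟩ := mem_vadd_finset.1 hg
        obtain ⟨ht1, _⟩ := mem_sdiff.1 ht
        obtain ⟨h1', hh1, hteq⟩ := mem_vadd_finset.1 ht1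
        rw [vadd_eq_add] at hteq
        have e : (-s) +ᵥ t = h1' - hs0 := by
          rw [vadd_eq_add, ← hteq, ← hseq]; abel
        rw [e]
        exact hsubC _ hh1 _ hhs0
      -- per-element bound over Q
      have bound2 : ∀ g ∈ Q, 2 * A.card + B.card ≤ (B - B).card + (A ∩ (g +ᵥ A)).card := by
        intro g hg
        obtain ⟨t, ht, hgt⟩ := mem_vadd_finset.1 hg
        rw [vadd_eq_add] at hgt
        obtain ⟨ht1, ht2⟩ := mem_sdiff.1 ht
        -- X1 = s +ᵥ (-A), X2 = t +ᵥ (-A), both in b0 +ᵥ (B−B), disjoint from B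
        have hXc : ∀ w ∈ T, w +ᵥ (-A) ⊆ b0 +ᵥ (B - B) := by
          intro w hw y hy
          obtain ⟨hw1, _⟩ := mem_sdiff.1 hw
          obtain ⟨hw0, hhw0, hweq⟩ := mem_vadd_finset.1 hw1
          rw [vadd_eq_add] at hweq
          obtain ⟨r, hr, rfl⟩ := mem_vadd_finset.1 hy
          obtain ⟨q, hq, rfl⟩ := mem_neg.1 hr
          refine mem_vadd_finset.2 ⟨hw0 - (q - a0), ?_, ?_⟩
          · refine hsubC _ hhw0 _ ?_
            rw [← hsetEq]; exact sub_mem_sub hq ha0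
          · rw [vadd_eq_add, vadd_eq_add, ← hweq]; abel
        have hXd : ∀ w ∈ T, Disjoint B (w +ᵥ (-A)) := by
          intro w hw
          rw [disjoint_left]
          intro p hpB hpX
          obtain ⟨r, hr, hpr⟩ := mem_vadd_finset.1 hpX
          obtain ⟨q, hq, rfl⟩ := mem_neg.1 hr
          rw [vadd_eq_add] at hpr
          have : w ∈ A + B := by
            have e : w = q + p := by rw [← hpr]; abel
            rw [e]; exact add_mem_add hq hpB
          exact (mem_sdiff.1 hw).2 this
        have hBc : B ⊆ b0 +ᵥ (B - B) := by
          intro p hp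
          exact mem_vadd_finset.2 ⟨p - b0, sub_mem_sub hp hb0, by rw [vadd_eq_add]; abel⟩
        have e1 := card_inter_add_card_union (s +ᵥ (-A)) (t +ᵥ (-A))
        have e2 : ((s +ᵥ (-A)) ∩ (t +ᵥ (-A))).card = (A ∩ (g +ᵥ A)).card := by
          rw [transInter (-A) s t, negInter]
          have : -(s - t) = g := by rw [← hgt]; abel
          rw [this]
        have e3 := card_union_of_disjoint
          (disjoint_union_right.2 ⟨hXd s hs, hXd t ht⟩)
        have e4 := card_le_card
          (union_subset hBc (union_subset (hXc s hs) (hXc t ht)))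
        rw [card_vadd_finset] at e4
        rw [card_vadd_finset, card_vadd_finset, card_neg] at e1
        rw [e2] at e1
        rw [e3] at e4
        omega
      -- fiberwise count: ∑_{g ∈ B−B} |A ∩ (g +ᵥ A)| = |A|^2
      have hfib : ∀ g : G,
          ((A ×ˢ A).filter (fun p => p.1 - p.2 = g)).card = (A ∩ (g +ᵥ A)).card := by
        intro g
        apply card_nbij' (i := fun p => p.1) (j := fun q => (q, q - g))
        · intro p hp
          simp only [Finset.mem_coe, mem_filter, mem_product] at hp
          obtain ⟨⟨hp1, hp2⟩, hpg⟩ := hp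
          refine mem_inter.2 ⟨hp1, mem_vadd_finset.2 ⟨p.2, hp2, ?_⟩⟩
          rw [vadd_eq_add, ← hpg]; abel
        · intro q hq
          obtain ⟨hqA, hqv⟩ := mem_inter.1 hq
          obtain ⟨r, hr, hqr⟩ := mem_vadd_finset.1 hqv
          rw [vadd_eq_add] at hqr
          simp only [Finset.mem_coe, mem_filter, mem_product]
          refine ⟨⟨hqA, ?_⟩, by abel⟩
          have : q - g = r := by rw [← hqr]; abel
          rw [this]; exact hr
        · intro p hp
          simp only [Finset.mem_coe, mem_filter, mem_product] at hp
          obtain ⟨⟨hp1, hp2⟩, hpg⟩ := hp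
          have : p.1 - g = p.2 := by rw [← hpg]; abel
          rw [Prod.ext_iff]
          exact ⟨rfl, this⟩
        · intro q hq
          rfl
      have hsum : ∑ g ∈ B - B, (A ∩ (g +ᵥ A)).card = A.card * A.card := by
        have hmap : ∀ p ∈ A ×ˢ A, (fun p : G × G => p.1 - p.2) p ∈ B - B := by
          intro p hp
          obtain ⟨hp1, hp2⟩ := mem_product.1 hp
          rw [← hsetEq]
          exact sub_mem_sub hp1 hp2
        calc ∑ g ∈ B - B, (A ∩ (g +ᵥ A)).card
            = ∑ g ∈ B - B, ((A ×ˢ A).filter (fun p => p.1 - p.2 = g)).card :=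
              Finset.sum_congr rfl (fun g _ => (hfib g).symm)
          _ = (A ×ˢ A).card := (card_eq_sum_card_fiberwise hmap).symm
          _ = A.card * A.card := by rw [card_product]
      -- C1
      have C1 : (B - B).card * (2 * A.card) ≤ A.card * A.card + (B - B).card * (A + B).card := by
        have hle := Finset.sum_le_sum (s := B - B)
          (f := fun _ => 2 * A.card) (g := fun g => (A + B).card + (A ∩ (g +ᵥ A)).card) ov1
        rw [Finset.sum_const, Finset.sum_add_distrib, Finset.sum_const, hsum, smul_eq_mul,
          smul_eq_mul] at hle
        omega
      -- C2
      have hsplit := Finset.sum_sdiff (f := fun g => (A ∩ (g +ᵥ A)).card) hQsub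
      rw [hsum] at hsplit
      have hRQ := card_sdiff_add_card_eq_card hQsub
      have CQ : Q.card * (2 * A.card + B.card) ≤
          Q.card * (B - B).card + ∑ g ∈ Q, (A ∩ (g +ᵥ A)).card := by
        have hle := Finset.sum_le_sum (s := Q)
          (f := fun _ => 2 * A.card + B.card)
          (g := fun g => (B - B).card + (A ∩ (g +ᵥ A)).card) bound2
        rw [Finset.sum_const, Finset.sum_add_distrib, Finset.sum_const, smul_eq_mul,
          smul_eq_mul] at hle
        omega
      have CR : ((B - B) \ Q).card * (2 * A.card) ≤
          ((B - B) \ Q).card * (A + B).card + ∑ g ∈ (B - B) \ Q, (A ∩ (g +ᵥ A)).card := by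
        have hle := Finset.sum_le_sum (s := (B - B) \ Q)
          (f := fun _ => 2 * A.card)
          (g := fun g => (A + B).card + (A ∩ (g +ᵥ A)).card)
          (fun g hg => ov1 g (sdiff_subset hg))
        rw [Finset.sum_const, Finset.sum_add_distrib, Finset.sum_const, smul_eq_mul,
          smul_eq_mul] at hle
        omega
      -- numeric endgame
      have hma : A.card ≤ (A + B).card := card_le_card_add_right hBne
      have hQm : Q.card + (A + B).card = (B - B).card := by rw [hQcard]; exact hTcard
      have hRm : ((B - B) \ Q).card = (A + B).card := by omega
      rw [hRm] at CR
      have hC2N : Q.card * (2 * A.card + B.card) + (A + B).card * (2 * A.card) ≤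
          A.card * A.card + Q.card * (B - B).card + (A + B).card * (A + B).card := by
        linarith [CQ, CR, hsplit]
      refine keyNum (A.card : ℤ) (B.card : ℤ) ((A + B).card : ℤ) ((B - B).card : ℤ)
        (by exact_mod_cast hAB) (by exact_mod_cast h2) (by exact_mod_cast h1)
        (by exact_mod_cast hma) (by exact_mod_cast hxab) (by exact_mod_cast C1) ?_
      have hxmQ : ((B - B).card : ℤ) - ((A + B).card : ℤ) = (Q.card : ℤ) := by omega
      rw [hxmQ]
      exact_mod_cast hC2N
  · intro z hz
    obtain ⟨p, hp, q, hq, rfl⟩ := mem_add.1 hz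
    have e : p + q - (a0 + b0) = (p - a0) + (q - b0) := by abel
    rw [e]
    have m1 : p - a0 ∈ B - B := by rw [← hsetEq]; exact sub_mem_sub hp ha0
    have m2 : q - b0 ∈ B - B := sub_mem_sub hq hb0
    exact H.add_mem ((hmemH _).2 m1) ((hmemH _).2 m2)
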